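/- Let X and Y be finite simple graphs. If (S_Y = ∅ or X is connected) and (T_Y = ∅ or X^c is connected), then every automorphism of the lexicographic product X ∘ Y lies in the image of the natural embedding of Aut(X) ≀ Aut(Y), i.e. Aut(X ∘ Y) ≅ Aut(X) ≀ Aut(Y) (Sabidussi's theorem, sufficiency direction). -/

import Mathlib

/-- The lexicographic product `X ∘ Y`: vertex set `X × Y`, with
`(i,α) ~ (j,β)` iff (`α = β` and `i ~_X j`) or `α ~_Y β`. -/
def lexProd {α β : Type*} (X : SimpleGraph α) (Y : SimpleGraph β) :
    SimpleGraph (α × β) where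
  Adj p q := (p.2 = q.2 ∧ X.Adj p.1 q.1) ∨ Y.Adj p.2 q.2
  symm := by
    constructor
    rintro ⟨i, a⟩ ⟨j, b⟩ (⟨h1, h2⟩ | h)
    · exact Or.inl ⟨h1.symm, h2.symm⟩
    · exact Or.inr h.symm
  loopless := by
    constructor
    rintro ⟨i, a⟩ (⟨-, h⟩ | h)
    · exact X.loopless.irrefl i h
    · exact Y.loopless.irrefl a h

/-- A permutation of the vertices is a graph automorphism if it preserves adjacency. -/
def IsGraphAut {α : Type*} (X : SimpleGraph α) (σ : Equiv.Perm α) : Prop :=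
  ∀ i j, X.Adj (σ i) (σ j) ↔ X.Adj i j

/-- The permutation `(i,a) ↦ (σ_a i, τ a)` of `α × β`. -/
def wreathMap {α β : Type*} (σ : β → Equiv.Perm α) (τ : Equiv.Perm β) :
    Equiv.Perm (α × β) where
  toFun p := (σ p.2 p.1, τ p.2)
  invFun q := ((σ (τ.symm q.2)).symm q.1, τ.symm q.2)
  left_inv := by rintro ⟨i, a⟩; simp
  right_inv := by rintro ⟨j, b⟩; simp

private lemma lexProd_adj {α β : Type*} (X : SimpleGraph α) (Y : SimpleGraph β) (p q : α × β) :
    (lexProd X Y).Adj p q ↔ (p.2 = q.2 ∧ X.Adj p.1 q.1) ∨ Y.Adj p.2 q.2 := Iff.rfl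

private lemma column_const {α β : Type*} [Fintype α] [Fintype β]
    (X : SimpleGraph α) (Y : SimpleGraph β)
    (hS : (¬ ∃ y₀ y₁ : β, y₀ ≠ y₁ ∧ Y.neighborSet y₀ = Y.neighborSet y₁) ∨ X.Connected)
    (hT : (¬ ∃ y₀ y₁ : β, y₀ ≠ y₁ ∧
            Y.neighborSet y₀ ∪ {y₀} = Y.neighborSet y₁ ∪ {y₁}) ∨ Xᶜ.Connected)
    (f : Equiv.Perm (α × β)) (hf : IsGraphAut (lexProd X Y) f)
    (a : β) (i j : α) : (f (i, a)).2 = (f (j, a)).2 := by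
  classical
  by_contra hne
  -- the image of the column is a module
  have module : ∀ (k : α) (e : β), (∀ i', f (i', a) ≠ (k, e)) → ∀ i',
      ((lexProd X Y).Adj (k, e) (f (i', a)) ↔ Y.Adj (f.symm (k, e)).2 a) := by
    intro k e hke i'
    have hp2 : (f.symm (k, e)).2 ≠ a := by
      intro hpa
      apply hke (f.symm (k, e)).1
      rw [← hpa, Prod.mk.eta]
      exact f.apply_symm_apply _
    have h1 : (lexProd X Y).Adj (k, e) (f (i', a)) ↔
        (lexProd X Y).Adj (f.symm (k, e)) (i', a) := by
      conv_lhs => rw [← f.apply_symm_apply (k, e)]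
      exact hf _ _
    rw [h1, lexProd_adj]
    constructor
    · rintro (⟨h2, -⟩ | h2)
      · exact absurd h2 hp2
      · exact h2
    · exact Or.inr
  have adjcol : ∀ (k : α) (e : β) (i' : α), e ≠ (f (i', a)).2 →
      ((lexProd X Y).Adj (k, e) (f (i', a)) ↔ Y.Adj e (f (i', a)).2) := by
    intro k e i' hne'
    rw [lexProd_adj]
    constructor
    · rintro (⟨h2, -⟩ | h2)
      · exact absurd h2 hne'
      · exact h2
    · exact Or.inr
  -- for every column e, there is a vertex (k,e) outside the image of the column a
  have exk : ∀ e : β, ∃ k : α, ∀ i', f (i', a) ≠ (k, e) := by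
    intro e
    by_cases hcase : ∃ i', (f (i', a)).2 = e
    · obtain ⟨i', hi'⟩ := hcase
      have hj' : ∃ j', (f (j', a)).2 ≠ e := by
        by_cases h1 : (f (i, a)).2 = e
        · exact ⟨j, fun hc => hne (h1.trans hc.symm)⟩
        · exact ⟨i, h1⟩
      obtain ⟨j', hj'⟩ := hj'
      set Fc := Finset.univ.filter (fun x => (f (x, a)).2 = e) with hFc
      have hcard : Fc.card < Fintype.card α := by
        rw [← Finset.card_univ]
        refine Finset.card_lt_card (Finset.ssubset_univ_iff.mpr ?_)
        intro hFcu
        have hmem : j' ∈ Fc := hFcu ▸ Finset.mem_univ j'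
        rw [hFc, Finset.mem_filter] at hmem
        exact hj' hmem.2
      have h2 : ∃ k, k ∉ Fc.image (fun x => (f (x, a)).1) := by
        by_contra hk
        push_neg at hk
        have h3 : (Finset.univ : Finset α) ⊆ Fc.image (fun x => (f (x, a)).1) :=
          fun k _ => hk k
        have h4 := Finset.card_le_card h3
        rw [Finset.card_univ] at h4
        have h5 := Finset.card_image_le (s := Fc) (f := fun x => (f (x, a)).1)
        omega
      obtain ⟨k, hk⟩ := h2
      refine ⟨k, fun i'' hfi => hk ?_⟩
      refine Finset.mem_image.mpr ⟨i'', ?_, congrArg Prod.fst hfi⟩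
      rw [hFc, Finset.mem_filter]
      exact ⟨Finset.mem_univ _, congrArg Prod.snd hfi⟩
    · exact ⟨i, fun i' hfi => hcase ⟨i', congrArg Prod.snd hfi⟩⟩
  -- cross column adjacency is uniform
  have cross : ∀ e, e ≠ (f (i, a)).2 → e ≠ (f (j, a)).2 →
      (Y.Adj e (f (i, a)).2 ↔ Y.Adj e (f (j, a)).2) := by
    intro e hec hed
    obtain ⟨k, hk⟩ := exk e
    rw [← adjcol k e i hec, ← adjcol k e j hed, module k e hk i, module k e hk j]
  by_cases hedge : ∃ c d, (∃ i', (f (i', a)).2 = c) ∧ (∃ j', (f (j', a)).2 = d) ∧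
      c ≠ d ∧ Y.Adj c d
  · -- Case II : the image columns are pairwise completely joined
    have uniform : ∀ c, (∃ i', (f (i', a)).2 = c) →
        (∀ d, (∃ i', (f (i', a)).2 = d) → d ≠ c → Y.Adj c d) ∨
        (∀ d, (∃ i', (f (i', a)).2 = d) → d ≠ c → ¬Y.Adj c d) := by
      intro c hc
      obtain ⟨k, hk⟩ := exk c
      by_cases hex : ∃ d, (∃ i', (f (i', a)).2 = d) ∧ d ≠ c ∧ Y.Adj c d
      · left
        obtain ⟨d₀, ⟨i₀, hi₀⟩, hd₀, hadj₀⟩ := hex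
        intro d hd hdc
        obtain ⟨i₁, hi₁⟩ := hd
        have e₀ : (lexProd X Y).Adj (k, c) (f (i₀, a)) ↔ Y.Adj c (f (i₀, a)).2 :=
          adjcol k c i₀ (by rw [hi₀]; exact Ne.symm hd₀)
        have e₁ : (lexProd X Y).Adj (k, c) (f (i₁, a)) ↔ Y.Adj c (f (i₁, a)).2 :=
          adjcol k c i₁ (by rw [hi₁]; exact Ne.symm hdc)
        have hmm : Y.Adj c (f (i₀, a)).2 ↔ Y.Adj c (f (i₁, a)).2 := by
          rw [← e₀, ← e₁, module k c hk i₀, module k c hk i₁]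
        rw [hi₀, hi₁] at hmm
        exact hmm.mp hadj₀
      · right
        intro d hd hdc hadj
        exact hex ⟨d, hd, hdc, hadj⟩
    obtain ⟨c₀, d₀, hc₀, hd₀, hcd₀, hadj₀⟩ := hedge
    have full₀ : ∀ d, (∃ i', (f (i', a)).2 = d) → d ≠ c₀ → Y.Adj c₀ d := by
      rcases uniform c₀ hc₀ with hfull | hemp
      · exact hfull
      · exact absurd hadj₀ (hemp d₀ hd₀ (Ne.symm hcd₀))
    have alledge : ∀ c d, (∃ i', (f (i', a)).2 = c) → (∃ j', (f (j', a)).2 = d) →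
        c ≠ d → Y.Adj c d := by
      intro c d hc hd hcd
      rcases uniform c hc with hfull | hemp
      · exact hfull d hd (Ne.symm hcd)
      · by_cases hcc₀ : c = c₀
        · subst hcc₀
          exact absurd hadj₀ (hemp d₀ hd₀ (Ne.symm hcd₀))
        · exact absurd ((Y.adj_comm _ _).mp (full₀ c hc hcc₀)) (hemp c₀ hc₀ (Ne.symm hcc₀))
    -- complement of X is disconnected
    have hconstc : ∀ (p q : α), Xᶜ.Walk p q → (f (p, a)).2 = (f (q, a)).2 := by
      intro p q w
      induction w with
      | nil => rfl
      | @cons u v r huv w ih =>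
        refine Eq.trans ?_ ih
        by_contra hne2
        have hY : Y.Adj (f (u, a)).2 (f (v, a)).2 := alledge _ _ ⟨u, rfl⟩ ⟨v, rfl⟩ hne2
        have h6 := (hf (u, a) (v, a)).mp ((lexProd_adj X Y _ _).mpr (Or.inr hY))
        rcases (lexProd_adj X Y _ _).mp h6 with ⟨-, hX⟩ | hYaa
        · exact ((X.compl_adj u v).mp huv).2 hX
        · exact Y.loopless.irrefl a hYaa
    have hXcnc : ¬ Xᶜ.Connected := fun hcon =>
      hne ((hcon.preconnected i j).elim (hconstc i j))
    have hT' := hT.resolve_right hXcnc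
    apply hT'
    refine ⟨(f (i, a)).2, (f (j, a)).2, hne, ?_⟩
    ext e
    simp only [Set.mem_union, SimpleGraph.mem_neighborSet, Set.mem_singleton_iff]
    by_cases hec : e = (f (i, a)).2
    · subst hec
      constructor
      · intro _
        exact Or.inl ((Y.adj_comm _ _).mp (alledge _ _ ⟨i, rfl⟩ ⟨j, rfl⟩ hne))
      · intro _
        exact Or.inr rfl
    · by_cases hed : e = (f (j, a)).2
      · subst hed
        constructor
        · intro _
          exact Or.inr rfl
        · intro _
          exact Or.inl ((Y.adj_comm _ _).mp (alledge _ _ ⟨j, rfl⟩ ⟨i, rfl⟩ (Ne.symm hne)))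
      · have hcr := cross e hec hed
        constructor
        · rintro (hadj | hec')
          · exact Or.inl ((Y.adj_comm _ _).mp (hcr.mp ((Y.adj_comm _ _).mp hadj)))
          · exact absurd hec' hec
        · rintro (hadj | hed')
          · exact Or.inl ((Y.adj_comm _ _).mp (hcr.mpr ((Y.adj_comm _ _).mp hadj)))
          · exact absurd hed' hed
  · -- Case I : no edges between the image columns
    have noedge : ∀ c d, (∃ i', (f (i', a)).2 = c) → (∃ j', (f (j', a)).2 = d) →
        c ≠ d → ¬Y.Adj c d := by
      intro c d hc hd hcd hadj
      exact hedge ⟨c, d, hc, hd, hcd, hadj⟩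
    have hconst : ∀ (p q : α), X.Walk p q → (f (p, a)).2 = (f (q, a)).2 := by
      intro p q w
      induction w with
      | nil => rfl
      | @cons u v r huv w ih =>
        refine Eq.trans ?_ ih
        have hadj : (lexProd X Y).Adj (f (u, a)) (f (v, a)) :=
          (hf _ _).mpr ((lexProd_adj X Y _ _).mpr (Or.inl ⟨rfl, huv⟩))
        rcases (lexProd_adj X Y _ _).mp hadj with ⟨he, -⟩ | hY
        · exact he
        · exact absurd hY (noedge _ _ ⟨u, rfl⟩ ⟨v, rfl⟩ hY.ne)
    have hXnc : ¬ X.Connected := fun hcon =>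
      hne ((hcon.preconnected i j).elim (hconst i j))
    have hS' := hS.resolve_right hXnc
    apply hS'
    refine ⟨(f (i, a)).2, (f (j, a)).2, hne, ?_⟩
    ext e
    simp only [SimpleGraph.mem_neighborSet]
    by_cases hec : e = (f (i, a)).2
    · subst hec
      exact iff_of_false (Y.loopless.irrefl _) (noedge _ _ ⟨j, rfl⟩ ⟨i, rfl⟩ (Ne.symm hne))
    · by_cases hed : e = (f (j, a)).2
      · subst hed
        exact iff_of_false (noedge _ _ ⟨i, rfl⟩ ⟨j, rfl⟩ hne) (Y.loopless.irrefl _)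
      · have hcr := cross e hec hed
        constructor
        · intro hadj
          exact (Y.adj_comm _ _).mp (hcr.mp ((Y.adj_comm _ _).mp hadj))
        · intro hadj
          exact (Y.adj_comm _ _).mp (hcr.mpr ((Y.adj_comm _ _).mp hadj))

/-- **Sabidussi, sufficiency.** If (`S_Y = ∅` or `X` is connected) and
(`T_Y = ∅` or `Xᶜ` is connected), then every automorphism of the lexicographic product
`X ∘ Y` lies in the image of the natural embedding of `Aut(X) ≀ Aut(Y)`. -/
theorem sabidussi_sufficiency {α β : Type*} [Fintype α] [Fintype β]
    (X : SimpleGraph α) (Y : SimpleGraph β)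
    (hS : (¬ ∃ y₀ y₁ : β, y₀ ≠ y₁ ∧ Y.neighborSet y₀ = Y.neighborSet y₁) ∨ X.Connected)
    (hT : (¬ ∃ y₀ y₁ : β, y₀ ≠ y₁ ∧
            Y.neighborSet y₀ ∪ {y₀} = Y.neighborSet y₁ ∪ {y₁}) ∨ Xᶜ.Connected)
    (f : Equiv.Perm (α × β)) (hf : IsGraphAut (lexProd X Y) f) :
    ∃ (σ : β → Equiv.Perm α) (τ : Equiv.Perm β),
      (∀ a, IsGraphAut X (σ a)) ∧ IsGraphAut Y τ ∧ f = wreathMap σ τ := by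
    classical
  cases isEmpty_or_nonempty α with
  | inl hα =>
    haveI := hα
    refine ⟨fun _ => 1, 1, fun a i j => isEmptyElim i, fun i j => by simp, ?_⟩
    exact Equiv.ext fun p => isEmptyElim p.1
  | inr hα =>
    obtain ⟨i₀⟩ := hα
    have key : ∀ (a : β) (i j : α), (f (i, a)).2 = (f (j, a)).2 :=
      fun a i j => column_const X Y hS hT f hf a i j
    have hfsymm : IsGraphAut (lexProd X Y) f.symm := by
      intro p q
      conv_rhs => rw [← f.apply_symm_apply p, ← f.apply_symm_apply q]
      exact (hf _ _).symm
    have keysymm : ∀ (a : β) (i j : α), (f.symm (i, a)).2 = (f.symm (j, a)).2 :=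
      fun a i j => column_const X Y hS hT f.symm hfsymm a i j
    have hσinj : ∀ a, Function.Injective (fun i => (f (i, a)).1) := by
      intro a x y hxy
      simp only at hxy
      have h1 : f (x, a) = f (y, a) := Prod.ext hxy (key a x y)
      have h2 := f.injective h1
      exact (Prod.ext_iff.mp h2).1
    have hτinj : Function.Injective (fun b => (f (i₀, b)).2) := by
      intro x y hxy
      simp only at hxy
      have h1 := keysymm ((f (i₀, x)).2) ((f (i₀, x)).1) ((f (i₀, y)).1)
      rw [Prod.mk.eta, hxy, Prod.mk.eta, Equiv.symm_apply_apply, Equiv.symm_apply_apply] at h1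
      exact h1
    refine ⟨fun a => Equiv.ofBijective _ (Finite.injective_iff_bijective.mp (hσinj a)),
            Equiv.ofBijective _ (Finite.injective_iff_bijective.mp hτinj), ?_, ?_, ?_⟩
    · intro a p q
      show X.Adj (f (p, a)).1 (f (q, a)).1 ↔ X.Adj p q
      constructor
      · intro hx
        have h3 := (hf (p, a) (q, a)).mp ((lexProd_adj X Y _ _).mpr (Or.inl ⟨key a p q, hx⟩))
        rcases (lexProd_adj X Y _ _).mp h3 with ⟨-, h⟩ | hY
        · exact h
        · exact absurd hY (Y.loopless.irrefl a)
      · intro hx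
        have h3 := (hf (p, a) (q, a)).mpr ((lexProd_adj X Y _ _).mpr (Or.inl ⟨rfl, hx⟩))
        rcases (lexProd_adj X Y _ _).mp h3 with ⟨-, h⟩ | hY
        · exact h
        · rw [key a p q] at hY
          exact absurd hY (Y.loopless.irrefl _)
    · intro x y
      show Y.Adj (f (i₀, x)).2 (f (i₀, y)).2 ↔ Y.Adj x y
      by_cases hxy : x = y
      · subst hxy
        exact iff_of_false (Y.loopless.irrefl _) (Y.loopless.irrefl _)
      · have hne2 : (f (i₀, x)).2 ≠ (f (i₀, y)).2 := fun h => hxy (hτinj h)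
        constructor
        · intro hY
          have h3 := (hf (i₀, x) (i₀, y)).mp ((lexProd_adj X Y _ _).mpr (Or.inr hY))
          rcases (lexProd_adj X Y _ _).mp h3 with ⟨he, -⟩ | h
          · exact absurd he hxy
          · exact h
        · intro hY
          have h3 := (hf (i₀, x) (i₀, y)).mpr ((lexProd_adj X Y _ _).mpr (Or.inr hY))
          rcases (lexProd_adj X Y _ _).mp h3 with ⟨he, -⟩ | h
          · exact absurd he hne2
          · exact h
    · refine Equiv.ext fun p => ?_
      show f p = ((f (p.1, p.2)).1, (f (i₀, p.2)).2)
      rw [key p.2 i₀ p.1]
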